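/- If m is minimal with λₘ = 0, then M(λ) = span{vⱼ : j ≥ m+1} is a maximal submodule of the Verma module V(λ), and every submodule N of V(λ) contained in span{vⱼ : j ≥ 1} satisfies N ⊆ M(λ). -/

import Mathlib

private lemma dU_d_apply (L : ℕ → ℂ) (D : (ℕ →₀ ℂ) →ₗ[ℂ] (ℕ →₀ ℂ))
    (hD0 : D (Finsupp.single 0 1) = 0)
    (hD : ∀ n : ℕ, D (Finsupp.single (n + 1) 1) = L n • Finsupp.single n 1) :
    ∀ (f : ℕ →₀ ℂ) (n : ℕ), (D f) n = L n * f (n + 1) := by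
  intro f n
  induction f using Finsupp.induction_linear with
  | zero => simp
  | add f g hf hg => simp [map_add, hf, hg]; ring
  | single a b =>
    have hb : (Finsupp.single a b : ℕ →₀ ℂ) = b • Finsupp.single a 1 := by
      rw [Finsupp.smul_single', mul_one]
    rw [hb, map_smul]
    cases a with
    | zero => simp [hD0, Finsupp.single_apply]
    | succ a' =>
      rw [hD a']
      rcases eq_or_ne a' n with rfl | h
      · simp [Finsupp.single_apply]; ring
      · simp [Finsupp.single_apply, h, (by omega : ¬ a' + 1 = n + 1)]

private lemma dU_u_apply_zero (U : (ℕ →₀ ℂ) →ₗ[ℂ] (ℕ →₀ ℂ))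
    (hU : ∀ n : ℕ, U (Finsupp.single n 1) = Finsupp.single (n + 1) 1) :
    ∀ f : ℕ →₀ ℂ, (U f) 0 = 0 := by
  intro f
  induction f using Finsupp.induction_linear with
  | zero => simp
  | add f g hf hg => simp [map_add, hf, hg]
  | single a b =>
    have hb : (Finsupp.single a b : ℕ →₀ ℂ) = b • Finsupp.single a 1 := by
      rw [Finsupp.smul_single', mul_one]
    rw [hb, map_smul, hU a]
    simp [Finsupp.single_apply]

private lemma dU_u_apply_succ (U : (ℕ →₀ ℂ) →ₗ[ℂ] (ℕ →₀ ℂ))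
    (hU : ∀ n : ℕ, U (Finsupp.single n 1) = Finsupp.single (n + 1) 1) :
    ∀ (f : ℕ →₀ ℂ) (n : ℕ), (U f) (n + 1) = f n := by
  intro f n
  induction f using Finsupp.induction_linear with
  | zero => simp
  | add f g hf hg => simp [map_add, hf, hg]
  | single a b =>
    have hb : (Finsupp.single a b : ℕ →₀ ℂ) = b • Finsupp.single a 1 := by
      rw [Finsupp.smul_single', mul_one]
    rw [hb, map_smul, hU a]
    rcases eq_or_ne a n with rfl | h
    · simp [Finsupp.single_apply]
    · simp [Finsupp.single_apply, h, (by omega : ¬ a + 1 = n + 1)]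

private lemma dU_d_pow (L : ℕ → ℂ) (D : (ℕ →₀ ℂ) →ₗ[ℂ] (ℕ →₀ ℂ))
    (hD0 : D (Finsupp.single 0 1) = 0)
    (hD : ∀ n : ℕ, D (Finsupp.single (n + 1) 1) = L n • Finsupp.single n 1) :
    ∀ (k : ℕ) (f : ℕ →₀ ℂ) (n : ℕ),
      ((D ^ k) f) n = (∏ t ∈ Finset.range k, L (n + t)) * f (n + k) := by
  intro k
  induction k with
  | zero => intro f n; simp
  | succ k ih =>
    intro f n
    rw [pow_succ, Module.End.mul_apply, ih (D f) n, dU_d_apply L D hD0 hD f (n + k),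
      Finset.prod_range_succ, show n + (k + 1) = n + k + 1 from rfl]
    ring

private lemma dU_u_pow (U : (ℕ →₀ ℂ) →ₗ[ℂ] (ℕ →₀ ℂ))
    (hU : ∀ n : ℕ, U (Finsupp.single n 1) = Finsupp.single (n + 1) 1) :
    ∀ (k : ℕ) (f : ℕ →₀ ℂ) (n : ℕ), ((U ^ k) f) (n + k) = f n := by
  intro k
  induction k with
  | zero => intro f n; simp
  | succ k ih =>
    intro f n
    rw [pow_succ, Module.End.mul_apply, show n + (k + 1) = (n + 1) + k by omega,
      ih (U f) (n + 1), dU_u_apply_succ U hU]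

private lemma dU_pow_stab (T : (ℕ →₀ ℂ) →ₗ[ℂ] (ℕ →₀ ℂ)) (W : Submodule ℂ (ℕ →₀ ℂ))
    (h : ∀ w ∈ W, T w ∈ W) : ∀ (k : ℕ), ∀ w ∈ W, (T ^ k) w ∈ W := by
  intro k
  induction k with
  | zero => intro w hw; simpa using hw
  | succ k ih =>
    intro w hw
    rw [pow_succ, Module.End.mul_apply]
    exact ih _ (h w hw)

/-- Proposition 2.4(b),(c): if m is minimal with λₘ = 0, then
M(λ) = span{vⱼ : j ≥ m+1} is a maximal submodule of the Verma module V(λ),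
and every submodule contained in span{vⱼ : j ≥ 1} is contained in M(λ). -/
theorem downUp_verma_maximal_submodule (α β γ lam : ℂ) (L : ℕ → ℂ)
    (hL0 : L 0 = lam) (hL1 : L 1 = α * lam + γ)
    (hrec : ∀ n : ℕ, L (n + 2) = α * L (n + 1) + β * L n + γ)
    (D U : (ℕ →₀ ℂ) →ₗ[ℂ] (ℕ →₀ ℂ))
    (hD0 : D (Finsupp.single 0 1) = 0)
    (hD : ∀ n : ℕ, D (Finsupp.single (n + 1) 1) = L n • Finsupp.single n 1)
    (hU : ∀ n : ℕ, U (Finsupp.single n 1) = Finsupp.single (n + 1) 1)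
    (m : ℕ) (hm : L m = 0) (hmin : ∀ k < m, L k ≠ 0)
    (M : Submodule ℂ (ℕ →₀ ℂ))
    (hM : M = Submodule.span ℂ
      {f : ℕ →₀ ℂ | ∃ j : ℕ, m + 1 ≤ j ∧ f = Finsupp.single j 1}) :
    (∀ w ∈ M, D w ∈ M) ∧ (∀ w ∈ M, U w ∈ M) ∧ M ≠ ⊤ ∧
    (∀ W : Submodule ℂ (ℕ →₀ ℂ), (∀ w ∈ W, D w ∈ W) → (∀ w ∈ W, U w ∈ W) →
      M < W → W = ⊤) ∧
    (∀ N : Submodule ℂ (ℕ →₀ ℂ), (∀ w ∈ N, D w ∈ N) → (∀ w ∈ N, U w ∈ N) →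
      N ≤ Submodule.span ℂ {f : ℕ →₀ ℂ | ∃ j : ℕ, 1 ≤ j ∧ f = Finsupp.single j 1} →
      N ≤ M) := by
  have hdap := dU_d_apply L D hD0 hD
  have hdpow := dU_d_pow L D hD0 hD
  have huz := dU_u_apply_zero U hU
  have hus := dU_u_apply_succ U hU
  have hupow := dU_u_pow U hU
  have hMs : M = Finsupp.supported ℂ ℂ {j | m + 1 ≤ j} := by
    rw [hM, Finsupp.supported_eq_span_single]
    congr 1
    ext f
    simp only [Set.mem_setOf_eq, Set.mem_image]
    constructor
    · rintro ⟨j, hj, rfl⟩; exact ⟨j, hj, rfl⟩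
    · rintro ⟨j, hj, rfl⟩; exact ⟨j, hj, rfl⟩
  have memM : ∀ f : ℕ →₀ ℂ, f ∈ M ↔ ∀ i, i ≤ m → f i = 0 := by
    intro f
    rw [hMs, Finsupp.mem_supported']
    constructor
    · intro h i hi
      exact h i (by simp only [Set.mem_setOf_eq]; omega)
    · intro h i hi
      simp only [Set.mem_setOf_eq, not_le] at hi
      exact h i (by omega)
  refine ⟨?_, ?_, ?_, ?_, ?_⟩
  · -- D-stability of M
    intro w hw
    rw [memM] at hw ⊢
    intro i hi
    rw [hdap]
    rcases eq_or_lt_of_le hi with rfl | hlt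
    · rw [hm, zero_mul]
    · rw [hw (i + 1) (by omega), mul_zero]
  · -- U-stability of M
    intro w hw
    rw [memM] at hw ⊢
    intro i hi
    cases i with
    | zero => exact huz w
    | succ n => rw [hus]; exact hw n (by omega)
  · -- M ≠ ⊤
    intro htop
    have h1 : (Finsupp.single 0 1 : ℕ →₀ ℂ) ∈ M := htop ▸ Submodule.mem_top
    have h2 := (memM _).mp h1 0 (Nat.zero_le m)
    simp at h2
  · -- maximality
    intro W hWD hWU hMW
    have hle : M ≤ W := hMW.le
    obtain ⟨w, hwW, hwM⟩ := SetLike.exists_of_lt hMW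
    set w' : ℕ →₀ ℂ := w.filter (fun i => i ≤ m) with hw'def
    have hw'W : w' ∈ W := by
      have hnegM : w.filter (fun i => ¬ i ≤ m) ∈ M := by
        rw [memM]
        intro i hi
        rw [Finsupp.filter_apply]
        exact if_neg (by simpa using hi)
      have heq : w' = w - w.filter (fun i => ¬ i ≤ m) :=
        eq_sub_of_add_eq (Finsupp.filter_pos_add_filter_neg w (fun i => i ≤ m))
      rw [heq]
      exact Submodule.sub_mem W hwW (hle hnegM)
    have hw'le : ∀ i, m < i → w' i = 0 := by
      intro i hi
      rw [hw'def, Finsupp.filter_apply]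
      exact if_neg (by omega)
    obtain ⟨i0, hi0m, hi0⟩ : ∃ i, i ≤ m ∧ w i ≠ 0 := by
      by_contra hc
      push_neg at hc
      exact hwM ((memM w).mpr hc)
    have hw'i0 : w' i0 ≠ 0 := by
      rw [hw'def, Finsupp.filter_apply, if_pos hi0m]
      exact hi0
    have hne : w'.support.Nonempty := ⟨i0, Finsupp.mem_support_iff.mpr hw'i0⟩
    set j := w'.support.max' hne with hjdef
    have hjmem : w' j ≠ 0 := Finsupp.mem_support_iff.mp (w'.support.max'_mem hne)
    have hjm : j ≤ m := by
      by_contra hc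
      push_neg at hc
      exact hjmem (hw'le j hc)
    have hmax : ∀ k, j < k → w' k = 0 := by
      intro k hk
      by_contra hc
      have h1 : k ∈ w'.support := Finsupp.mem_support_iff.mpr hc
      have h2 := Finset.le_max' _ k h1
      omega
    have hzW : (U ^ (m - j)) w' ∈ W := dU_pow_stab U W hWU (m - j) w' hw'W
    have hzm : ((U ^ (m - j)) w') m ≠ 0 := by
      have h1 := hupow (m - j) w' j
      rw [show j + (m - j) = m by omega] at h1
      rw [h1]
      exact hjmem
    have hzgt : ∀ n, m < n → ((U ^ (m - j)) w') n = 0 := by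
      intro n hn
      have h1 := hupow (m - j) w' (n - (m - j))
      rw [show n - (m - j) + (m - j) = n by omega] at h1
      rw [h1]
      exact hmax _ (by omega)
    have hxW : (D ^ m) ((U ^ (m - j)) w') ∈ W := dU_pow_stab D W hWD m _ hzW
    have hx0 : ((D ^ m) ((U ^ (m - j)) w')) 0
        = (∏ t ∈ Finset.range m, L t) * ((U ^ (m - j)) w') m := by
      simpa using hdpow m ((U ^ (m - j)) w') 0
    have hc0 : ((D ^ m) ((U ^ (m - j)) w')) 0 ≠ 0 := by
      rw [hx0]
      exact mul_ne_zero
        (Finset.prod_ne_zero_iff.mpr (fun t ht => hmin t (Finset.mem_range.mp ht))) hzm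
    have hxn : ∀ n, ((D ^ m) ((U ^ (m - j)) w')) (n + 1) = 0 := by
      intro n
      rw [hdpow m ((U ^ (m - j)) w') (n + 1), hzgt (n + 1 + m) (by omega), mul_zero]
    obtain ⟨c, hc, hcx⟩ : ∃ c : ℂ, c ≠ 0 ∧
        (D ^ m) ((U ^ (m - j)) w') = c • Finsupp.single 0 1 := by
      refine ⟨((D ^ m) ((U ^ (m - j)) w')) 0, hc0, ?_⟩
      ext n
      cases n with
      | zero => simp
      | succ n => simp [hxn n, Finsupp.single_apply]
    have hsW : (Finsupp.single 0 1 : ℕ →₀ ℂ) ∈ W := by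
      have h2 : c⁻¹ • (D ^ m) ((U ^ (m - j)) w') ∈ W := Submodule.smul_mem W _ hxW
      rwa [hcx, smul_smul, inv_mul_cancel₀ hc, one_smul] at h2
    have hall : ∀ n : ℕ, (Finsupp.single n 1 : ℕ →₀ ℂ) ∈ W := by
      intro n
      induction n with
      | zero => exact hsW
      | succ n ih =>
        have h3 := hWU _ ih
        rwa [hU n] at h3
    rw [eq_top_iff]
    intro f _
    rw [← Finsupp.sum_single f, Finsupp.sum]
    apply Submodule.sum_mem
    intro a _
    have h4 : (Finsupp.single a (f a) : ℕ →₀ ℂ) = (f a) • Finsupp.single a 1 := by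
      rw [Finsupp.smul_single', mul_one]
    rw [h4]
    exact Submodule.smul_mem W _ (hall a)
  · -- submodules inside span{v_j : j ≥ 1} are inside M
    intro N hND hNU hNle
    have hspan1 : Submodule.span ℂ
        {f : ℕ →₀ ℂ | ∃ j : ℕ, 1 ≤ j ∧ f = Finsupp.single j 1}
        = Finsupp.supported ℂ ℂ {j | 1 ≤ j} := by
      rw [Finsupp.supported_eq_span_single]
      congr 1
      ext f
      simp only [Set.mem_setOf_eq, Set.mem_image]
      constructor
      · rintro ⟨j, hj, rfl⟩; exact ⟨j, hj, rfl⟩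
      · rintro ⟨j, hj, rfl⟩; exact ⟨j, hj, rfl⟩
    rw [hspan1] at hNle
    intro w hwN
    rw [memM]
    by_contra hc
    push_neg at hc
    obtain ⟨i, him, hi⟩ := hc
    have hxN : (D ^ i) w ∈ N := dU_pow_stab D N hND i w hwN
    have h0 : ((D ^ i) w) 0 = (∏ t ∈ Finset.range i, L t) * w i := by
      simpa using hdpow i w 0
    have hne0 : ((D ^ i) w) 0 ≠ 0 := by
      rw [h0]
      refine mul_ne_zero (Finset.prod_ne_zero_iff.mpr (fun t ht => ?_)) hi
      have := Finset.mem_range.mp ht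
      exact hmin t (by omega)
    have hzero := (Finsupp.mem_supported' ℂ _).mp (hNle hxN) 0 (by simp)
    exact hne0 hzero
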